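/- Let x ∈ {0, c_1, ..., c_m}ⁿ with 0 < c_1 < ... < c_m and at most d nonzero entries, and let w = max over 1 ≤ k ≤ m of (c_m − c_{k−1})/(c_k − c_{k−1}) (with c_0 = 0). Then any q-ary additive (w,d)-disjunct t×n matrix A determines x uniquely from the outcome vector v = Ax; i.e., if x, x' ∈ {0,c_1,...,c_m}ⁿ are both d-sparse and Ax = Ax', then x = x'. -/

import Mathlib

/-- A matrix (with real entries, thought of as `q`-ary) is additive
`(w,d)`-disjunct if for every set `S` of at most `d` columns and every column
`k ∉ S`, some row `i` satisfies `M i k > w * ∑_{j ∈ S} M i j`. -/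
def AddDisjunct {t n : ℕ} (M : Fin t → Fin n → ℝ) (w : ℝ) (d : ℕ) : Prop :=
  ∀ S : Finset (Fin n), S.card ≤ d → ∀ k ∉ S, ∃ i, M i k > w * ∑ j ∈ S, M i j

/-- Entries of `M` belong to `{0,1,...,q-1}`. -/
def QaryEntries {t n : ℕ} (M : Fin t → Fin n → ℝ) (q : ℕ) : Prop :=
  ∀ i j, ∃ a : ℕ, a < q ∧ M i j = a

/-- Key lemma: given a coordinate `k` where `x k < x' k` and `x k` is minimal
among all values of differing coordinates, we derive a contradiction. -/
lemma one_sided_key (q t n m d : ℕ)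
    (A : Fin t → Fin n → ℝ) (hq : QaryEntries A q)
    (c : Fin (m + 1) → ℝ) (hc0 : c 0 = 0) (hmono : StrictMono c)
    (w : ℝ)
    (hw : ∀ k : Fin m, (c (Fin.last m) - c k.castSucc) / (c k.succ - c k.castSucc) ≤ w)
    (hdisj : AddDisjunct A w d)
    (x x' : Fin n → ℝ)
    (halpha : ∀ j, x j ∈ Set.range c) (halpha' : ∀ j, x' j ∈ Set.range c)
    (hsparse : ∃ S : Finset (Fin n), S.card ≤ d ∧ ∀ j ∉ S, x j = 0)
    (houtcome : ∀ i, ∑ j, A i j * x j = ∑ j, A i j * x' j)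
    (k : Fin n) (hk : x k < x' k)
    (hmin : ∀ j, x j ≠ x' j → x k ≤ x j ∧ x k ≤ x' j) : False := by
  -- basic facts
  have hA : ∀ i j, 0 ≤ A i j := by
    intro i j
    obtain ⟨a, _, ha⟩ := hq i j
    rw [ha]; positivity
  have hxbd : ∀ (y : Fin n → ℝ), (∀ j, y j ∈ Set.range c) →
      ∀ j, 0 ≤ y j ∧ y j ≤ c (Fin.last m) := by
    intro y hy j
    obtain ⟨r, hr⟩ := hy j
    constructor
    · rw [← hr, ← hc0]; exact hmono.monotone (Fin.zero_le r)
    · rw [← hr]; exact hmono.monotone (Fin.le_last r)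
  -- x k = c s, x' k = c r with s < r
  obtain ⟨s, hs⟩ := halpha k
  obtain ⟨r, hr⟩ := halpha' k
  have hsr : s < r := by
    by_contra h
    push_neg at h
    exact absurd (hk) (not_lt.2 (by rw [← hs, ← hr]; exact hmono.monotone h))
  have hslt : (s : ℕ) < m := by
    have := hsr.trans_le (Fin.le_last r)
    simpa [Fin.lt_iff_val_lt_val] using this
  set s' : Fin m := ⟨s, hslt⟩ with hs'def
  have hcast : s'.castSucc = s := by
    ext; simp [hs'def]
  have hsucc_le : s'.succ ≤ r := by
    simp only [Fin.le_iff_val_le_val, Fin.val_succ, hs'def]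
    exact hsr
  -- the sparse support
  obtain ⟨S₀, hS₀card, hS₀⟩ := hsparse
  set S : Finset (Fin n) := S₀.erase k with hSdef
  have hScard : S.card ≤ d := le_trans (Finset.card_erase_le) hS₀card
  obtain ⟨i, hi⟩ := hdisj S hScard k (Finset.notMem_erase k S₀)
  set T : ℝ := ∑ j ∈ S, A i j with hTdef
  have hT : 0 ≤ T := Finset.sum_nonneg fun j _ => hA i j
  -- the disjointness inequality
  have hδpos : 0 < c s'.succ - c s'.castSucc := by
    have := hmono (Fin.castSucc_lt_succ : s'.castSucc < s'.succ)
    linarith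
  have hwineq : c (Fin.last m) - c s'.castSucc ≤ w * (c s'.succ - c s'.castSucc) := by
    have := hw s'
    rw [div_le_iff₀ hδpos] at this
    linarith
  -- the k-th term is large
  have hkterm : A i k * x' k - A i k * x k > (c (Fin.last m) - c s) * T := by
    have h1 : A i k * (c s'.succ - c s'.castSucc) > (w * T) * (c s'.succ - c s'.castSucc) :=
      (mul_lt_mul_of_pos_right hi hδpos)
    have h2 : (w * (c s'.succ - c s'.castSucc)) * T ≥ (c (Fin.last m) - c s'.castSucc) * T :=
      mul_le_mul_of_nonneg_right hwineq hT
    have h3 : x' k - x k ≥ c s'.succ - c s'.castSucc := by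
      have : c s'.succ ≤ c r := hmono.monotone hsucc_le
      rw [hcast, ← hs, ← hr]
      linarith
    have h4 : A i k * (x' k - x k) ≥ A i k * (c s'.succ - c s'.castSucc) :=
      mul_le_mul_of_nonneg_left h3 (hA i k)
    rw [hcast] at h1 h2 h4
    nlinarith [hA i k, h1, h2, h3, h4]
  -- terms in S are not too negative
  have hSterm : ∑ j ∈ S, (A i j * x' j - A i j * x j) ≥ (c s - c (Fin.last m)) * T := by
    rw [hTdef, Finset.mul_sum]
    apply Finset.sum_le_sum
    intro j _
    have hxj := hxbd x halpha j
    have hx'j := hxbd x' halpha' j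
    rcases eq_or_ne (x j) (x' j) with h | h
    · have : (c s - c (Fin.last m)) ≤ 0 := by
        have : c s ≤ c (Fin.last m) := hmono.monotone (Fin.le_last s)
        linarith
      nlinarith [hA i j]
    · have := hmin j h
      have hbound : x' j - x j ≥ c s - c (Fin.last m) := by
        rw [← hs] at this
        linarith [this.2, hxj.2]
      nlinarith [hA i j, mul_le_mul_of_nonneg_left hbound (hA i j)]
  -- total sum
  have htot : (0 : ℝ) = ∑ j, (A i j * x' j - A i j * x j) := by
    rw [Finset.sum_sub_distrib]
    have := houtcome i
    linarith
  have hkmem : k ∈ (Finset.univ : Finset (Fin n)) := Finset.mem_univ k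
  rw [← Finset.sum_erase_add _ _ hkmem] at htot
  have hSsub : S ⊆ Finset.univ.erase k := by
    intro j hj
    refine Finset.mem_erase.2 ⟨?_, Finset.mem_univ j⟩
    exact (Finset.mem_erase.1 hj).1
  have hrest : ∑ j ∈ Finset.univ.erase k, (A i j * x' j - A i j * x j) ≥
      ∑ j ∈ S, (A i j * x' j - A i j * x j) := by
    apply Finset.sum_le_sum_of_subset_of_nonneg hSsub
    intro j hj hjS
    have hjk : j ≠ k := (Finset.mem_erase.1 hj).1
    have hjS₀ : j ∉ S₀ := by
      intro hmem
      exact hjS (Finset.mem_erase.2 ⟨hjk, hmem⟩)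
    have : x j = 0 := hS₀ j hjS₀
    rw [this, mul_zero, sub_zero]
    exact mul_nonneg (hA i j) (hxbd x' halpha' j).1
  linarith

/-- Corollary `ipg`: identification in the one-sided case. -/
theorem one_sided_identification (q t n m d : ℕ) (hm : 1 ≤ m)
    (A : Fin t → Fin n → ℝ) (hq : QaryEntries A q)
    (c : Fin (m + 1) → ℝ) (hc0 : c 0 = 0) (hmono : StrictMono c)
    (w : ℝ)
    (hw : ∀ k : Fin m, (c (Fin.last m) - c k.castSucc) / (c k.succ - c k.castSucc) ≤ w)
    (hdisj : AddDisjunct A w d)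
    (x x' : Fin n → ℝ)
    (halpha : ∀ j, x j ∈ Set.range c) (halpha' : ∀ j, x' j ∈ Set.range c)
    (hsparse : ∃ S : Finset (Fin n), S.card ≤ d ∧ ∀ j ∉ S, x j = 0)
    (hsparse' : ∃ S : Finset (Fin n), S.card ≤ d ∧ ∀ j ∉ S, x' j = 0)
    (houtcome : ∀ i, ∑ j, A i j * x j = ∑ j, A i j * x' j) :
    x = x' := by
  by_contra hne
  have hD : (Finset.univ.filter (fun j => x j ≠ x' j)).Nonempty := by
    rw [Finset.filter_nonempty_iff]
    by_contra h
    push_neg at h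
    exact hne (funext fun j => h j (Finset.mem_univ j))
  obtain ⟨k, hkD, hkmin⟩ := Finset.exists_min_image _ (fun j => min (x j) (x' j)) hD
  have hkne : x k ≠ x' k := (Finset.mem_filter.1 hkD).2
  rcases hkne.lt_or_gt with hlt | hlt
  · refine one_sided_key q t n m d A hq c hc0 hmono w hw hdisj x x' halpha halpha'
      hsparse houtcome k hlt ?_
    intro j hj
    have hjD : j ∈ Finset.univ.filter (fun j => x j ≠ x' j) :=
      Finset.mem_filter.2 ⟨Finset.mem_univ j, hj⟩
    have := hkmin j hjD
    have hmk : min (x k) (x' k) = x k := min_eq_left hlt.le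
    rw [hmk] at this
    exact ⟨le_trans this (min_le_left _ _), le_trans this (min_le_right _ _)⟩
  · refine one_sided_key q t n m d A hq c hc0 hmono w hw hdisj x' x halpha' halpha
      hsparse' (fun i => (houtcome i).symm) k hlt ?_
    intro j hj
    have hjD : j ∈ Finset.univ.filter (fun j => x j ≠ x' j) :=
      Finset.mem_filter.2 ⟨Finset.mem_univ j, fun h => hj h.symm⟩
    have := hkmin j hjD
    have hmk : min (x k) (x' k) = x' k := min_eq_right hlt.le
    rw [hmk] at this
    exact ⟨le_trans this (min_le_right _ _), le_trans this (min_le_left _ _)⟩
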